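/- If G is a connected finite simple graph whose distance matrix has rank 3, then G is a cograph, i.e., G contains no induced subgraph isomorphic to the path P_4 on four vertices. -/

import Mathlib

open SimpleGraph

/-- The distance matrix of a finite simple graph, over ℚ: the `(u,v)` entry is the
graph distance between `u` and `v`. -/
noncomputable def distMatrix {V : Type*} [Fintype V] (G : SimpleGraph V) : Matrix V V ℚ :=
  fun u v => (G.dist u v : ℚ)

/-- If a square submatrix (with injective index map) of a matrix over a field is
invertible, then the rank of the matrix is at least the size of the submatrix. -/
lemma le_rank_of_submatrix {V : Type*} [Fintype V] {k : ℕ} (A : Matrix V V ℚ)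
    (f : Fin k → V) (h : IsUnit (A.submatrix f f)) : k ≤ A.rank := by
  classical
  have hrows : LinearIndependent ℚ (fun i => (A.submatrix f f) i) :=
    Matrix.linearIndependent_rows_iff_isUnit.mpr h
  have hcomp : (fun i => (A.submatrix f f) i) =
      (LinearMap.funLeft ℚ ℚ f) ∘ (fun i : Fin k => A (f i)) := by
    funext i; rfl
  rw [hcomp] at hrows
  have hli : LinearIndependent ℚ (fun i : Fin k => A (f i)) :=
    hrows.of_comp (LinearMap.funLeft ℚ ℚ f)
  have hcard : Fintype.card (Fin k) =
      Set.finrank ℚ (Set.range (fun i : Fin k => A (f i))) :=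
    linearIndependent_iff_card_eq_finrank_span.mp hli
  rw [Fintype.card_fin] at hcard
  have hle : Submodule.span ℚ (Set.range (fun i : Fin k => A (f i))) ≤
      Submodule.span ℚ (Set.range A) := by
    apply Submodule.span_mono
    rintro _ ⟨i, rfl⟩
    exact ⟨f i, rfl⟩
  have := Submodule.finrank_mono hle
  rw [A.rank_eq_finrank_span_row]
  change _ ≤ Module.finrank ℚ (Submodule.span ℚ (Set.range A))
  rw [Set.finrank] at hcard
  omega

/-- If G is a connected finite simple graph whose distance matrix has rank 3, then G is a
cograph, i.e. G has no induced subgraph isomorphic to the path P₄ on four vertices. -/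
theorem cograph_of_distRank_eq_three {V : Type*} [Fintype V] (G : SimpleGraph V)
    (hG : G.Connected) (hr : (distMatrix G).rank = 3) :
    ¬ Nonempty (pathGraph 4 ↪g G) := by
  rintro ⟨f⟩
  have hinj := f.injective
  have hAdj : ∀ u v : Fin 4, G.Adj (f u) (f v) ↔ (pathGraph 4).Adj u v :=
    fun u v => f.map_adj_iff
  -- adjacency facts
  have a01 : G.Adj (f 0) (f 1) := (hAdj 0 1).mpr (by rw [pathGraph_adj]; decide)
  have a12 : G.Adj (f 1) (f 2) := (hAdj 1 2).mpr (by rw [pathGraph_adj]; decide)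
  have a23 : G.Adj (f 2) (f 3) := (hAdj 2 3).mpr (by rw [pathGraph_adj]; decide)
  have n02 : ¬ G.Adj (f 0) (f 2) := fun h => by
    have := (hAdj 0 2).mp h; rw [pathGraph_adj] at this; revert this; decide
  have n13 : ¬ G.Adj (f 1) (f 3) := fun h => by
    have := (hAdj 1 3).mp h; rw [pathGraph_adj] at this; revert this; decide
  have n03 : ¬ G.Adj (f 0) (f 3) := fun h => by
    have := (hAdj 0 3).mp h; rw [pathGraph_adj] at this; revert this; decide
  -- distances
  have d01 : G.dist (f 0) (f 1) = 1 := SimpleGraph.dist_eq_one_iff_adj.mpr a01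
  have d12 : G.dist (f 1) (f 2) = 1 := SimpleGraph.dist_eq_one_iff_adj.mpr a12
  have d23 : G.dist (f 2) (f 3) = 1 := SimpleGraph.dist_eq_one_iff_adj.mpr a23
  have dist2 : ∀ u v w : Fin 4, G.Adj (f u) (f v) → G.Adj (f v) (f w) →
      ¬ G.Adj (f u) (f w) → f u ≠ f w → G.dist (f u) (f w) = 2 := by
    intro u v w huv hvw hnw hne
    have hle : G.dist (f u) (f w) ≤ 2 := by
      have := G.dist_le (Walk.cons huv (Walk.cons hvw Walk.nil))
      simpa using this
    have h0 : G.dist (f u) (f w) ≠ 0 :=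
      SimpleGraph.dist_ne_zero_iff_ne_and_reachable.mpr ⟨hne, hG.preconnected _ _⟩
    have h1 : G.dist (f u) (f w) ≠ 1 := fun h => hnw (SimpleGraph.dist_eq_one_iff_adj.mp h)
    omega
  have ne02 : f 0 ≠ f 2 := fun h => by have := hinj h; simp at this
  have ne13 : f 1 ≠ f 3 := fun h => by have := hinj h; simp at this
  have ne03 : f 0 ≠ f 3 := fun h => by have := hinj h; simp at this
  have d02 : G.dist (f 0) (f 2) = 2 := dist2 0 1 2 a01 a12 n02 ne02
  have d13 : G.dist (f 1) (f 3) = 2 := dist2 1 2 3 a12 a23 n13 ne13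
  have d10 : G.dist (f 1) (f 0) = 1 := by rw [SimpleGraph.dist_comm]; exact d01
  have d21 : G.dist (f 2) (f 1) = 1 := by rw [SimpleGraph.dist_comm]; exact d12
  have d32 : G.dist (f 3) (f 2) = 1 := by rw [SimpleGraph.dist_comm]; exact d23
  have d20 : G.dist (f 2) (f 0) = 2 := by rw [SimpleGraph.dist_comm]; exact d02
  have d31 : G.dist (f 3) (f 1) = 2 := by rw [SimpleGraph.dist_comm]; exact d13
  have d30 : G.dist (f 3) (f 0) = G.dist (f 0) (f 3) := by rw [SimpleGraph.dist_comm]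
  have d03 : G.dist (f 0) (f 3) = 2 ∨ G.dist (f 0) (f 3) = 3 := by
    have hle : G.dist (f 0) (f 3) ≤ 3 := by
      have := G.dist_le (Walk.cons a01 (Walk.cons a12 (Walk.cons a23 Walk.nil)))
      simpa using this
    have h0 : G.dist (f 0) (f 3) ≠ 0 :=
      SimpleGraph.dist_ne_zero_iff_ne_and_reachable.mpr ⟨ne03, hG.preconnected _ _⟩
    have h1 : G.dist (f 0) (f 3) ≠ 1 := fun h => n03 (SimpleGraph.dist_eq_one_iff_adj.mp h)
    omega
  -- the 4×4 submatrix
  have key : ∀ x : ℚ, G.dist (f 0) (f 3) = x →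
      (x = 2 ∨ x = 3) →
      (distMatrix G).submatrix f f =
        !![0, 1, 2, x; 1, 0, 1, 2; 2, 1, 0, 1; x, 2, 1, 0] := by
    intro x hx _
    ext i j
    fin_cases i <;> fin_cases j <;>
      simp only [Matrix.submatrix_apply, distMatrix, ← hx] <;>
      simp [SimpleGraph.dist_self, d01, d12, d23, d02, d13, d10, d21, d32, d20, d31, d30]
  have hunit : IsUnit ((distMatrix G).submatrix f f) := by
    rcases d03 with h | h
    · rw [key 2 (by exact_mod_cast congrArg (Nat.cast : ℕ → ℚ) h) (Or.inl rfl)]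
      rw [Matrix.isUnit_iff_isUnit_det, isUnit_iff_ne_zero]
      rw [Matrix.det_succ_row_zero]; simp [Fin.sum_univ_succ, Matrix.det_fin_three, Matrix.submatrix, Fin.succAbove]; norm_num
    · rw [key 3 (by exact_mod_cast congrArg (Nat.cast : ℕ → ℚ) h) (Or.inr rfl)]
      rw [Matrix.isUnit_iff_isUnit_det, isUnit_iff_ne_zero]
      rw [Matrix.det_succ_row_zero]; simp [Fin.sum_univ_succ, Matrix.det_fin_three, Matrix.submatrix, Fin.succAbove]; norm_num
  have := le_rank_of_submatrix (distMatrix G) f hunit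
  omega
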